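/- Fix an integer m ≥ 1 and let V₁ and V₂ both be decreasing chains realizing duals of type-Z modules: V₁ = C(a₀,a₁,…,a_ℓ) with a_j = a₀−jm and a_ℓ ≥ 0, and V₂ = C(b₀,b₁,…,b_{ℓ'}) with b_j = b₀−jm and b_{ℓ'} ≥ 0. Then S_t(V₁,V₂) = 0 for all t ≥ 1. -/

import Mathlib

noncomputable section

/-- Extended factorial of a rational number: `q!` if `q` is a nonnegative integer,
and `0` otherwise. -/
def qfact (q : ℚ) : ℝ :=
  if q.den = 1 ∧ 0 ≤ q.num then (q.num.toNat).factorial else 0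

/-- `(-1)^q` for an integer rational `q` (junk value `1` otherwise). -/
def qsign (q : ℚ) : ℝ := if q.den = 1 then (-1 : ℝ) ^ q.num else 1

/-- The triangle coefficient `Δ(j₁,j₂,j₃)`: defined by the factorial formula when
`j₁+j₂+j₃ ∈ ℤ` and `|j₁-j₂| ≤ j₃ ≤ j₁+j₂` (the triangle condition), and `0` otherwise. -/
def cgDelta (j1 j2 j3 : ℚ) : ℝ :=
  if (j1 + j2 + j3).den = 1 ∧ |j1 - j2| ≤ j3 ∧ j3 ≤ j1 + j2 then
    Real.sqrt (qfact (j1 + j2 - j3) * qfact (j1 - j2 + j3) * qfact (-j1 + j2 + j3)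
      / qfact (j1 + j2 + j3 + 1))
  else 0

/-- The main Clebsch–Gordan formula (used when `m₃ ≥ 0` and `j₁ ≥ j₂`).  Terms of the sum
in which some factorial argument is not a nonnegative integer vanish, since `qfact` is then `0`
and division by zero is zero; the summation range contains all integers `r ≥ 0` with
`j₁+j₂-j₃-r ≥ 0`. -/
def CGmain (j1 m1 j2 m2 j3 m3 : ℚ) : ℝ :=
  cgDelta j1 j2 j3 * Real.sqrt (2 * (j3 : ℝ) + 1) *
    Real.sqrt (qfact (j1 + m1) * qfact (j1 - m1) * qfact (j2 + m2) * qfact (j2 - m2) *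
      qfact (j3 + m3) * qfact (j3 - m3)) *
    ∑ r ∈ Finset.range ((j1 + j2 - j3).num.toNat + 1),
      (-1 : ℝ) ^ r /
        ((r.factorial : ℝ) * qfact (j1 + j2 - j3 - (r : ℚ)) * qfact (j1 - m1 - (r : ℚ)) *
          qfact (j2 + m2 - (r : ℚ)) * qfact (j3 - j2 + m1 + (r : ℚ)) *
          qfact (j3 - j1 - m2 + (r : ℚ)))

/-- The Clebsch–Gordan coefficient `CG(j₁,m₁;j₂,m₂|j₃,m₃)`.  It vanishes unless
`m₁+m₂ = m₃`, `|mᵢ| ≤ jᵢ` and `jᵢ+mᵢ ∈ ℤ` for `i = 1,2,3`; when these hold it is given by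
the main formula if `m₃ ≥ 0` and `j₁ ≥ j₂`, and extended by the symmetries
`CG(j₁,m₁;j₂,m₂|j₃,m₃) = (-1)^{j₁+j₂-j₃} CG(j₁,-m₁;j₂,-m₂|j₃,-m₃)` (for `m₃ < 0`) and
`CG(j₁,m₁;j₂,m₂|j₃,m₃) = (-1)^{j₁+j₂-j₃} CG(j₂,m₂;j₁,m₁|j₃,m₃)` (for `j₁ < j₂`). -/
def CG (j1 m1 j2 m2 j3 m3 : ℚ) : ℝ :=
  if m1 + m2 = m3 ∧ |m1| ≤ j1 ∧ |m2| ≤ j2 ∧ |m3| ≤ j3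
      ∧ (j1 + m1).den = 1 ∧ (j2 + m2).den = 1 ∧ (j3 + m3).den = 1 then
    if 0 ≤ m3 then
      if j2 ≤ j1 then CGmain j1 m1 j2 m2 j3 m3
      else qsign (j1 + j2 - j3) * CGmain j2 m2 j1 m1 j3 m3
    else
      qsign (j1 + j2 - j3) *
        (if j2 ≤ j1 then CGmain j1 (-m1) j2 (-m2) j3 (-m3)
         else qsign (j1 + j2 - j3) * CGmain j2 (-m2) j1 (-m1) j3 (-m3))
  else 0

open scoped TensorProduct

/-- The standard sl(2)-module `V(a)` of highest weight `a`, realized on `Fin (a+1) → ℝ`. -/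
abbrev Vn (a : ℕ) : Type := Fin (a + 1) → ℝ

def sl2coefE (a k : ℕ) : ℝ :=
  Real.sqrt ((a / 2 : ℝ) * (a / 2 + 1) - ((a / 2 : ℝ) - k + 1) * ((a / 2 : ℝ) - k))

def sl2coefF (a k : ℕ) : ℝ :=
  Real.sqrt ((a / 2 : ℝ) * (a / 2 + 1) - ((a / 2 : ℝ) - k - 1) * ((a / 2 : ℝ) - k))

/-- Matrix of `E` on `V(a)`: the `l`-th basis vector is sent to `sl2coefE a l` times the
`(l-1)`-st one. -/
def matE (a : ℕ) : Matrix (Fin (a + 1)) (Fin (a + 1)) ℝ :=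
  fun k l => if (k : ℕ) + 1 = (l : ℕ) then sl2coefE a (l : ℕ) else 0

/-- Matrix of `H` on `V(a)`: diagonal with entries `a - 2l`. -/
def matH (a : ℕ) : Matrix (Fin (a + 1)) (Fin (a + 1)) ℝ :=
  fun k l => if k = l then (a : ℝ) - 2 * ((l : ℕ) : ℝ) else 0

/-- Matrix of `F` on `V(a)`: the `l`-th basis vector is sent to `sl2coefF a l` times the
`(l+1)`-st one. -/
def matF (a : ℕ) : Matrix (Fin (a + 1)) (Fin (a + 1)) ℝ :=
  fun k l => if (k : ℕ) = (l : ℕ) + 1 then sl2coefF a (l : ℕ) else 0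

/-- The action of `e` on `V(a)`. -/
def opE (a : ℕ) : Vn a →ₗ[ℝ] Vn a := Matrix.toLin' (matE a)
/-- The action of `h` on `V(a)`. -/
def opH (a : ℕ) : Vn a →ₗ[ℝ] Vn a := Matrix.toLin' (matH a)
/-- The action of `f` on `V(a)`. -/
def opF (a : ℕ) : Vn a →ₗ[ℝ] Vn a := Matrix.toLin' (matF a)

/-- The standard basis vector `v_k` of `V(a)`. -/
def bv (a : ℕ) (k : Fin (a + 1)) : Vn a := Pi.single k 1

/-- Matrix of the map `rho^{a,b}_s : V(b) → V(a)` defining the action of the basis element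
`e_s` of `V(m)` on the uniserial `(sl(2) ⋉ V(m))`-module `E(a,b)`: the `j`-th basis vector of
`V(b)` is sent to `(-1)^j CG(a/2, a/2-i; b/2, -b/2+j | m/2, m/2-s)` times the `i`-th basis
vector of `V(a)`, where `i = j + s + (a-b-m)/2` (and to `0` if this `i` is out of range). -/
def rhoMat (m a b s : ℕ) : Matrix (Fin (a + 1)) (Fin (b + 1)) ℝ :=
  fun i j =>
    if 2 * ((i : ℕ) : ℤ) = 2 * ((j : ℕ) : ℤ) + 2 * (s : ℤ) + (a : ℤ) - (b : ℤ) - (m : ℤ) then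
      (-1 : ℝ) ^ (j : ℕ) *
        CG ((a : ℚ) / 2) ((a : ℚ) / 2 - ((i : ℕ) : ℚ)) ((b : ℚ) / 2)
          (-(b : ℚ) / 2 + ((j : ℕ) : ℚ)) ((m : ℚ) / 2) ((m : ℚ) / 2 - (s : ℚ))
    else 0

/-- The map `rho^{a,b}_s : V(b) → V(a)`. -/
def rho (m a b s : ℕ) : Vn b →ₗ[ℝ] Vn a := Matrix.toLin' (rhoMat m a b s)

/-- `S₁(E(a,b), E(c,d)) ⊆ (V(a) ⊗ V(d)) × (V(b) ⊗ V(c))`: the degree-one part of the socle of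
the `(sl(2) ⋉ V(m))`-module `E(a,b) ⊗ E(c,d)`, i.e. the pairs `(x,y)` with
`(id ⊗ rho^{c,d}_s) x + (rho^{a,b}_s ⊗ id) y = 0` for all `s = 0, …, m`. -/
def S1E (m a b c d : ℕ) :
    Submodule ℝ ((Vn a ⊗[ℝ] Vn d) × (Vn b ⊗[ℝ] Vn c)) :=
  ⨅ (s : ℕ) (_ : s ≤ m), LinearMap.ker
    ((TensorProduct.map LinearMap.id (rho m c d s)) ∘ₗ (LinearMap.fst ℝ _ _)
      + (TensorProduct.map (rho m a b s) LinearMap.id) ∘ₗ (LinearMap.snd ℝ _ _))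

/-- The diagonal action of an sl(2) generator `X` on `(V(a) ⊗ V(d)) × (V(b) ⊗ V(c))`. -/
def diagPair (a d b c : ℕ) (X : ∀ n, Vn n →ₗ[ℝ] Vn n) :
    ((Vn a ⊗[ℝ] Vn d) × (Vn b ⊗[ℝ] Vn c)) →ₗ[ℝ] ((Vn a ⊗[ℝ] Vn d) × (Vn b ⊗[ℝ] Vn c)) :=
  LinearMap.prodMap
    (TensorProduct.map (X a) LinearMap.id + TensorProduct.map LinearMap.id (X d))
    (TensorProduct.map (X b) LinearMap.id + TensorProduct.map LinearMap.id (X c))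

/-- `S ≅ V(μ)` as sl(2)-modules, where the ambient space `M` of `S` carries the sl(2)-action
`DE, DH, DF`: there is an injective linear map `V(μ) → M` with range `S` intertwining the
standard action on `V(μ)` with `DE, DH, DF`. -/
def IsoToV (μ : ℕ) {M : Type} [AddCommGroup M] [Module ℝ M]
    (DE DH DF : M →ₗ[ℝ] M) (S : Submodule ℝ M) : Prop :=
  ∃ ψ : Vn μ →ₗ[ℝ] M, Function.Injective ψ ∧ LinearMap.range ψ = S ∧
    ψ ∘ₗ opE μ = DE ∘ₗ ψ ∧ ψ ∘ₗ opH μ = DH ∘ₗ ψ ∧ ψ ∘ₗ opF μ = DF ∘ₗ ψ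

/-- The degree-`t` component of the tensor product of two chain modules whose sl(2)-socle
factors are `V(a 0), V(a 1), …` and `V(b 0), V(b 1), …`. -/
abbrev chainSpace (a b : ℕ → ℕ) (t : ℕ) : Type :=
  ∀ i : Fin (t + 1), Vn (a (i : ℕ)) ⊗[ℝ] Vn (b (t - (i : ℕ)))

/-- `S_t` for the tensor product of the chain modules `C(a 0, …, a l)` and `C(b 0, …, b l')`
over `sl(2) ⋉ V(m)`: the set of tuples `(x_i)` in the degree-`t` component whose entries
outside the admissible index range vanish and which are annihilated by every `e_s`, i.e.
`(rho^{a_i,a_{i+1}}_s ⊗ id) x_{i+1} + (id ⊗ rho^{b_{t-i-1},b_{t-i}}_s) x_i = 0`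
for all `0 ≤ s ≤ m` and all `i < t`. -/
def chainSt (m : ℕ) (a b : ℕ → ℕ) (l l' t : ℕ) : Submodule ℝ (chainSpace a b t) :=
  (⨅ (i : Fin (t + 1)) (_ : l < (i : ℕ) ∨ l' < t - (i : ℕ)),
    LinearMap.ker (LinearMap.proj (R := ℝ) i))
  ⊓ ⨅ (s : ℕ) (_ : s ≤ m) (i : ℕ) (h : i < t), LinearMap.ker
      ((TensorProduct.map (rho m (a i) (a (i + 1)) s) LinearMap.id) ∘ₗ
          LinearMap.proj (R := ℝ) (⟨i + 1, by omega⟩ : Fin (t + 1))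
        + (TensorProduct.map LinearMap.id (rho m (b (t - i - 1)) (b (t - i)) s)) ∘ₗ
          LinearMap.proj (R := ℝ) (⟨i, by omega⟩ : Fin (t + 1)))

/-- The diagonal action of an sl(2) generator `X` on the degree-`t` component. -/
def chainD (a b : ℕ → ℕ) (t : ℕ) (X : ∀ n, Vn n →ₗ[ℝ] Vn n) :
    chainSpace a b t →ₗ[ℝ] chainSpace a b t :=
  LinearMap.pi fun i =>
    (TensorProduct.map (X (a (i : ℕ))) LinearMap.id
      + TensorProduct.map LinearMap.id (X (b (t - (i : ℕ))))) ∘ₗ LinearMap.proj (R := ℝ) i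

/-- The componentwise sl(2)-action of a generator `X` on the direct sum `⊕_{k<K} V(f k)`. -/
def piOp (f : ℕ → ℕ) (K : ℕ) (X : ∀ n, Vn n →ₗ[ℝ] Vn n) :
    (∀ k : Fin K, Vn (f (k : ℕ))) →ₗ[ℝ] (∀ k : Fin K, Vn (f (k : ℕ))) :=
  LinearMap.pi fun k => X (f (k : ℕ)) ∘ₗ LinearMap.proj (R := ℝ) k

/-- `S ≅ ⊕_{k<K} V(f k)` as sl(2)-modules (same convention as `IsoToV`). -/
def IsoToPi (f : ℕ → ℕ) (K : ℕ) {M : Type} [AddCommGroup M] [Module ℝ M]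
    (DE DH DF : M →ₗ[ℝ] M) (S : Submodule ℝ M) : Prop :=
  ∃ ψ : (∀ k : Fin K, Vn (f (k : ℕ))) →ₗ[ℝ] M,
    Function.Injective ψ ∧ LinearMap.range ψ = S ∧
    ψ ∘ₗ piOp f K opE = DE ∘ₗ ψ ∧ ψ ∘ₗ piOp f K opH = DH ∘ₗ ψ ∧ ψ ∘ₗ piOp f K opF = DF ∘ₗ ψ

section CGfacts

lemma qfact_natCast (n : ℕ) : qfact (n : ℚ) = n.factorial := by
  simp [qfact]

lemma qfact_pos (n : ℕ) : 0 < qfact (n : ℚ) := by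
  rw [qfact_natCast]; positivity

lemma qfact_intCast_neg {n : ℤ} (h : n < 0) : qfact (n : ℚ) = 0 := by
  rw [qfact, if_neg]; rintro ⟨-, h2⟩; rw [Rat.num_intCast] at h2; omega

lemma qsign_ne_zero (q : ℚ) : qsign q ≠ 0 := by
  rw [qsign]; split
  · exact zpow_ne_zero _ (by norm_num)
  · norm_num

lemma CGmain_ne (m c d : ℕ) (hm : 1 ≤ m) :
    CGmain (((c:ℚ)+d+m)/2) (((c:ℚ)+d+m)/2 - c) (((c:ℚ)+d)/2) (((c:ℚ)+d)/2 - d)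
      ((m:ℚ)/2) ((m:ℚ)/2) ≠ 0 := by
  rw [CGmain]
  apply mul_ne_zero
  apply mul_ne_zero
  apply mul_ne_zero
  · -- cgDelta
    rw [cgDelta, if_pos]
    · rw [show ((c:ℚ)+d+m)/2 + ((c:ℚ)+d)/2 - (m:ℚ)/2 = ((c+d:ℕ):ℚ) by push_cast; ring,
        show ((c:ℚ)+d+m)/2 - ((c:ℚ)+d)/2 + (m:ℚ)/2 = ((m:ℕ):ℚ) by push_cast; ring,
        show -(((c:ℚ)+d+m)/2) + ((c:ℚ)+d)/2 + (m:ℚ)/2 = ((0:ℕ):ℚ) by push_cast; ring,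
        show ((c:ℚ)+d+m)/2 + ((c:ℚ)+d)/2 + (m:ℚ)/2 + 1 = ((c+d+m+1:ℕ):ℚ) by push_cast; ring]
      have := qfact_pos (c+d); have := qfact_pos m; have := qfact_pos 0
      have := qfact_pos (c+d+m+1)
      rw [Real.sqrt_ne_zero']
      positivity
    · refine ⟨?_, ?_, ?_⟩
      · rw [show ((c:ℚ)+d+m)/2 + ((c:ℚ)+d)/2 + (m:ℚ)/2 = ((c+d+m:ℕ):ℚ) by push_cast; ring]
        exact Rat.den_natCast _
      · rw [show ((c:ℚ)+d+m)/2 - ((c:ℚ)+d)/2 = (m:ℚ)/2 by ring,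
          abs_of_nonneg (by positivity)]
      · have : (0:ℚ) ≤ c + d := by positivity
        linarith
  · rw [Real.sqrt_ne_zero']
    have : (0:ℝ) ≤ ((m:ℚ)/2 : ℚ) := by push_cast; positivity
    push_cast
    positivity
  · rw [show ((c:ℚ)+d+m)/2 + (((c:ℚ)+d+m)/2 - c) = ((d+m:ℕ):ℚ) by push_cast; ring,
      show ((c:ℚ)+d+m)/2 - (((c:ℚ)+d+m)/2 - c) = ((c:ℕ):ℚ) by push_cast; ring,
      show ((c:ℚ)+d)/2 + (((c:ℚ)+d)/2 - d) = ((c:ℕ):ℚ) by push_cast; ring,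
      show ((c:ℚ)+d)/2 - (((c:ℚ)+d)/2 - d) = ((d:ℕ):ℚ) by push_cast; ring,
      show (m:ℚ)/2 + (m:ℚ)/2 = ((m:ℕ):ℚ) by push_cast; ring,
      show (m:ℚ)/2 - (m:ℚ)/2 = ((0:ℕ):ℚ) by push_cast; ring]
    have h1 := qfact_pos (d+m); have h2 := qfact_pos c; have h3 := qfact_pos d
    have h4 := qfact_pos m; have h5 := qfact_pos 0
    rw [Real.sqrt_ne_zero']
    positivity
  · -- the sum
    rw [show ((c:ℚ)+d+m)/2 + ((c:ℚ)+d)/2 - (m:ℚ)/2 = ((c+d:ℕ):ℚ) by push_cast; ring]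
    rw [Rat.num_natCast, Int.toNat_natCast]
    rw [Finset.sum_eq_single c]
    · rw [show ((c+d:ℕ):ℚ) - (c:ℚ) = ((d:ℕ):ℚ) by push_cast; ring,
        show ((c:ℚ)+d+m)/2 - (((c:ℚ)+d+m)/2 - c) - (c:ℚ) = ((0:ℕ):ℚ) by push_cast; ring,
        show ((c:ℚ)+d)/2 + (((c:ℚ)+d)/2 - d) - (c:ℚ) = ((0:ℕ):ℚ) by push_cast; ring,
        show (m:ℚ)/2 - ((c:ℚ)+d)/2 + (((c:ℚ)+d+m)/2 - c) + (c:ℚ) = ((m:ℕ):ℚ) by push_cast; ring,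
        show (m:ℚ)/2 - ((c:ℚ)+d+m)/2 - (((c:ℚ)+d)/2 - d) + (c:ℚ) = ((0:ℕ):ℚ) by push_cast; ring]
      rw [qfact_natCast, qfact_natCast, qfact_natCast]
      apply div_ne_zero
      · exact pow_ne_zero _ (by norm_num)
      · have h0 : ((Nat.factorial 0 : ℕ) : ℝ) = 1 := by norm_num [Nat.factorial]
        positivity
    · intro r _ hr
      rcases lt_or_gt_of_ne hr with h | h
      · rw [show (m:ℚ)/2 - ((c:ℚ)+d+m)/2 - (((c:ℚ)+d)/2 - d) + (r:ℚ) = (((r:ℤ) - (c:ℤ) : ℤ):ℚ)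
          by push_cast; ring]
        rw [qfact_intCast_neg (by omega), mul_zero, div_zero]
      · rw [show ((c:ℚ)+d+m)/2 - (((c:ℚ)+d+m)/2 - c) - (r:ℚ) = (((c:ℤ) - (r:ℤ) : ℤ):ℚ)
          by push_cast; ring]
        rw [qfact_intCast_neg (by omega)]
        simp
    · intro hc
      exact absurd (Finset.mem_range.mpr (by omega)) hc

end CGfacts
lemma CG_s0_ne (m b j : ℕ) (hm : 1 ≤ m) (hj : j ≤ b) :
    CG (((b+m:ℕ):ℚ)/2) (((b+m:ℕ):ℚ)/2 - (j:ℚ)) ((b:ℚ)/2) (-(b:ℚ)/2 + (j:ℚ))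
      ((m:ℚ)/2) ((m:ℚ)/2 - ((0:ℕ):ℚ)) ≠ 0 := by
  have hd : ((b - j:ℕ):ℚ) = (b:ℚ) - (j:ℚ) := Nat.cast_sub hj
  have hjb : (j:ℚ) ≤ (b:ℚ) := by exact_mod_cast hj
  have hj0 : (0:ℚ) ≤ (j:ℚ) := by positivity
  have hm0 : (1:ℚ) ≤ (m:ℚ) := by exact_mod_cast hm
  have hcond : (((b+m:ℕ):ℚ)/2 - (j:ℚ)) + (-(b:ℚ)/2 + (j:ℚ)) = ((m:ℚ)/2 - ((0:ℕ):ℚ))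
      ∧ |(((b+m:ℕ):ℚ)/2 - (j:ℚ))| ≤ ((b+m:ℕ):ℚ)/2 ∧ |(-(b:ℚ)/2 + (j:ℚ))| ≤ (b:ℚ)/2
      ∧ |((m:ℚ)/2 - ((0:ℕ):ℚ))| ≤ (m:ℚ)/2
      ∧ (((b+m:ℕ):ℚ)/2 + (((b+m:ℕ):ℚ)/2 - (j:ℚ))).den = 1
      ∧ ((b:ℚ)/2 + (-(b:ℚ)/2 + (j:ℚ))).den = 1
      ∧ ((m:ℚ)/2 + ((m:ℚ)/2 - ((0:ℕ):ℚ))).den = 1 := by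
    refine ⟨by push_cast; ring, ?_, ?_, ?_, ?_, ?_, ?_⟩
    · rw [abs_le]; push_cast; constructor <;> linarith
    · rw [abs_le]; constructor <;> linarith
    · rw [abs_le]; push_cast; constructor <;> linarith
    · rw [show ((b+m:ℕ):ℚ)/2 + (((b+m:ℕ):ℚ)/2 - (j:ℚ)) = (((b:ℤ)+(m:ℤ)-(j:ℤ) : ℤ):ℚ) by
        push_cast; ring]
      exact Rat.den_intCast _
    · rw [show (b:ℚ)/2 + (-(b:ℚ)/2 + (j:ℚ)) = (((j:ℤ) : ℤ):ℚ) by push_cast; ring]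
      exact Rat.den_intCast _
    · rw [show (m:ℚ)/2 + ((m:ℚ)/2 - ((0:ℕ):ℚ)) = (((m:ℤ) : ℤ):ℚ) by push_cast; ring]
      exact Rat.den_intCast _
  rw [CG, if_pos hcond, if_pos (by push_cast; linarith), if_pos (by push_cast; linarith)]
  have key := CGmain_ne m j (b - j) hm
  rw [show -(b:ℚ)/2 + (j:ℚ) = ((j:ℚ)+((b-j:ℕ):ℚ))/2 - ((b-j:ℕ):ℚ) by rw [hd]; ring,
    show (m:ℚ)/2 - ((0:ℕ):ℚ) = (m:ℚ)/2 by push_cast; ring,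
    show (((b+m:ℕ):ℚ))/2 = ((j:ℚ)+((b-j:ℕ):ℚ)+(m:ℚ))/2 by rw [hd]; push_cast; ring,
    show ((b:ℚ))/2 = ((j:ℚ)+((b-j:ℕ):ℚ))/2 by rw [hd]; ring]
  exact key

lemma CG_sm_ne (m b j : ℕ) (hm : 1 ≤ m) (hj : j ≤ b) :
    CG (((b+m:ℕ):ℚ)/2) (((b+m:ℕ):ℚ)/2 - ((j+m:ℕ):ℚ)) ((b:ℚ)/2) (-(b:ℚ)/2 + (j:ℚ))
      ((m:ℚ)/2) ((m:ℚ)/2 - (m:ℚ)) ≠ 0 := by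
  have hd : ((b - j:ℕ):ℚ) = (b:ℚ) - (j:ℚ) := Nat.cast_sub hj
  have hjb : (j:ℚ) ≤ (b:ℚ) := by exact_mod_cast hj
  have hj0 : (0:ℚ) ≤ (j:ℚ) := by positivity
  have hm0 : (1:ℚ) ≤ (m:ℚ) := by exact_mod_cast hm
  have hcond : (((b+m:ℕ):ℚ)/2 - ((j+m:ℕ):ℚ)) + (-(b:ℚ)/2 + (j:ℚ)) = ((m:ℚ)/2 - (m:ℚ))
      ∧ |(((b+m:ℕ):ℚ)/2 - ((j+m:ℕ):ℚ))| ≤ ((b+m:ℕ):ℚ)/2 ∧ |(-(b:ℚ)/2 + (j:ℚ))| ≤ (b:ℚ)/2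
      ∧ |((m:ℚ)/2 - (m:ℚ))| ≤ (m:ℚ)/2
      ∧ (((b+m:ℕ):ℚ)/2 + (((b+m:ℕ):ℚ)/2 - ((j+m:ℕ):ℚ))).den = 1
      ∧ ((b:ℚ)/2 + (-(b:ℚ)/2 + (j:ℚ))).den = 1
      ∧ ((m:ℚ)/2 + ((m:ℚ)/2 - (m:ℚ))).den = 1 := by
    refine ⟨by push_cast; ring, ?_, ?_, ?_, ?_, ?_, ?_⟩
    · rw [abs_le]; push_cast; constructor <;> linarith
    · rw [abs_le]; constructor <;> linarith
    · rw [abs_le]; push_cast; constructor <;> linarith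
    · rw [show ((b+m:ℕ):ℚ)/2 + (((b+m:ℕ):ℚ)/2 - ((j+m:ℕ):ℚ)) = (((b:ℤ)-(j:ℤ) : ℤ):ℚ) by
        push_cast; ring]
      exact Rat.den_intCast _
    · rw [show (b:ℚ)/2 + (-(b:ℚ)/2 + (j:ℚ)) = (((j:ℤ) : ℤ):ℚ) by push_cast; ring]
      exact Rat.den_intCast _
    · rw [show (m:ℚ)/2 + ((m:ℚ)/2 - (m:ℚ)) = (((0:ℤ) : ℤ):ℚ) by push_cast; ring]
      exact Rat.den_intCast _
  rw [CG, if_pos hcond, if_neg (by rw [not_le]; linarith), if_pos (by push_cast; linarith)]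
  refine mul_ne_zero (qsign_ne_zero _) ?_
  have key := CGmain_ne m (b - j) j hm
  rw [show -(((b+m:ℕ):ℚ)/2 - ((j+m:ℕ):ℚ)) = (((b-j:ℕ):ℚ)+(j:ℚ)+(m:ℚ))/2 - ((b-j:ℕ):ℚ) by
      rw [hd]; push_cast; ring,
    show -(-(b:ℚ)/2 + (j:ℚ)) = (((b-j:ℕ):ℚ)+(j:ℚ))/2 - (j:ℚ) by rw [hd]; ring,
    show -((m:ℚ)/2 - (m:ℚ)) = (m:ℚ)/2 by ring,
    show (((b+m:ℕ):ℚ))/2 = (((b-j:ℕ):ℚ)+(j:ℚ)+(m:ℚ))/2 by rw [hd]; push_cast; ring,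
    show ((b:ℚ))/2 = (((b-j:ℕ):ℚ)+(j:ℚ))/2 by rw [hd]; ring]
  exact key

lemma rhoMat_s0_eq_zero {m a b : ℕ} (hab : a = b + m) {i : Fin (a+1)} {j : Fin (b+1)}
    (h : (i:ℕ) ≠ (j:ℕ)) : rhoMat m a b 0 i j = 0 := by
  rw [rhoMat]; exact if_neg (by omega)

lemma rhoMat_s0_ne_zero {m a b : ℕ} (hm : 1 ≤ m) (hab : a = b + m) {i : Fin (a+1)} {j : Fin (b+1)}
    (h : (i:ℕ) = (j:ℕ)) : rhoMat m a b 0 i j ≠ 0 := by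
  subst hab
  rw [rhoMat, if_pos (by omega)]
  refine mul_ne_zero (pow_ne_zero _ (by norm_num)) ?_
  rw [show (((i:ℕ):ℚ)) = (((j:ℕ)):ℚ) by exact_mod_cast congrArg (Nat.cast (R := ℚ)) h]
  exact CG_s0_ne m b (j:ℕ) hm (Nat.lt_succ_iff.mp j.isLt)

lemma rhoMat_sm_eq_zero {m a b : ℕ} (hab : a = b + m) {i : Fin (a+1)} {j : Fin (b+1)}
    (h : (i:ℕ) ≠ (j:ℕ) + m) : rhoMat m a b m i j = 0 := by
  rw [rhoMat]; exact if_neg (by omega)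

lemma rhoMat_sm_ne_zero {m a b : ℕ} (hm : 1 ≤ m) (hab : a = b + m) {i : Fin (a+1)} {j : Fin (b+1)}
    (h : (i:ℕ) = (j:ℕ) + m) : rhoMat m a b m i j ≠ 0 := by
  subst hab
  rw [rhoMat, if_pos (by omega)]
  refine mul_ne_zero (pow_ne_zero _ (by norm_num)) ?_
  rw [show (((i:ℕ):ℚ)) = ((((j:ℕ)+m:ℕ)):ℚ) by exact_mod_cast congrArg (Nat.cast (R := ℚ)) h]
  exact CG_sm_ne m b (j:ℕ) hm (Nat.lt_succ_iff.mp j.isLt)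
open TensorProduct in
def coordT {a b : ℕ} (j : Fin (a+1)) (k : Fin (b+1)) : (Vn a ⊗[ℝ] Vn b) →ₗ[ℝ] ℝ :=
  TensorProduct.lift ((LinearMap.mul ℝ ℝ).compl₁₂ (LinearMap.proj j) (LinearMap.proj k))

@[simp] lemma coordT_tmul {a b : ℕ} (j : Fin (a+1)) (k : Fin (b+1)) (v : Vn a) (w : Vn b) :
    coordT j k (v ⊗ₜ[ℝ] w) = v j * w k := rfl

lemma eq_zero_of_coordT {a b : ℕ} (x : Vn a ⊗[ℝ] Vn b)
    (h : ∀ j k, coordT j k x = 0) : x = 0 := by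
  classical
  set B1 := Pi.basisFun ℝ (Fin (a+1))
  set B2 := Pi.basisFun ℝ (Fin (b+1))
  have key : ∀ (y : Vn a ⊗[ℝ] Vn b) (j : Fin (a+1)) (k : Fin (b+1)),
      (B1.tensorProduct B2).repr y (j, k) = coordT j k y := by
    intro y
    induction y using TensorProduct.induction_on with
    | zero =>
      intro j k
      rw [(B1.tensorProduct B2).repr.map_zero, (coordT j k).map_zero]
      rfl
    | tmul v w =>
      intro j k
      rw [Module.Basis.tensorProduct_repr_tmul_apply, coordT_tmul]
      simp [B1, B2, Pi.basisFun_repr, smul_eq_mul, mul_comm]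
    | add u v hu hv =>
      intro j k
      rw [(B1.tensorProduct B2).repr.map_add, (coordT j k).map_add, Finsupp.add_apply, hu, hv]
  have h0 : (B1.tensorProduct B2).repr x = 0 := by
    ext jk
    obtain ⟨j, k⟩ := jk
    rw [Finsupp.coe_zero, Pi.zero_apply, key]
    exact h j k
  exact (LinearEquiv.map_eq_zero_iff _).mp h0

lemma coordT_rho_left {a a' b : ℕ} (m s : ℕ) (x : Vn a' ⊗[ℝ] Vn b)
    (j : Fin (a+1)) (k : Fin (b+1)) :
    coordT j k (TensorProduct.map (rho m a a' s) LinearMap.id x)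
      = ∑ p, rhoMat m a a' s j p * coordT p k x := by
  induction x using TensorProduct.induction_on with
  | zero =>
    rw [(TensorProduct.map (rho m a a' s) LinearMap.id).map_zero, (coordT j k).map_zero]
    exact (Finset.sum_eq_zero fun p _ => by rw [(coordT p k).map_zero, mul_zero]).symm
  | tmul v w =>
    rw [TensorProduct.map_tmul, LinearMap.id_apply, coordT_tmul]
    rw [show (rho m a a' s) v j = ∑ p, rhoMat m a a' s j p * v p by
      simp [rho, Matrix.toLin'_apply, Matrix.mulVec, dotProduct]]
    rw [Finset.sum_mul]
    exact Finset.sum_congr rfl fun p _ => by rw [coordT_tmul]; ring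
  | add u v hu hv =>
    rw [(TensorProduct.map (rho m a a' s) LinearMap.id).map_add, (coordT j k).map_add, hu, hv,
      ← Finset.sum_add_distrib]
    exact Finset.sum_congr rfl fun p _ => by rw [(coordT p k).map_add, mul_add]

lemma coordT_rho_right {a b b' : ℕ} (m s : ℕ) (x : Vn a ⊗[ℝ] Vn b')
    (j : Fin (a+1)) (k : Fin (b+1)) :
    coordT j k (TensorProduct.map LinearMap.id (rho m b b' s) x)
      = ∑ q, rhoMat m b b' s k q * coordT j q x := by
  induction x using TensorProduct.induction_on with
  | zero =>
    rw [(TensorProduct.map LinearMap.id (rho m b b' s)).map_zero, (coordT j k).map_zero]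
    exact (Finset.sum_eq_zero fun q _ => by rw [(coordT j q).map_zero, mul_zero]).symm
  | tmul v w =>
    rw [TensorProduct.map_tmul, LinearMap.id_apply, coordT_tmul]
    rw [show (rho m b b' s) w k = ∑ q, rhoMat m b b' s k q * w q by
      simp [rho, Matrix.toLin'_apply, Matrix.mulVec, dotProduct]]
    rw [Finset.mul_sum]
    exact Finset.sum_congr rfl fun q _ => by rw [coordT_tmul]; ring
  | add u v hu hv =>
    rw [(TensorProduct.map LinearMap.id (rho m b b' s)).map_add, (coordT j k).map_add, hu, hv,
      ← Finset.sum_add_distrib]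
    exact Finset.sum_congr rfl fun q _ => by rw [(coordT j q).map_add, mul_add]
lemma key_step {A B : ℕ} (C : Matrix (Fin (A+1)) (Fin (B+1)) ℝ)
    (g : Fin (B+1) → ℝ) (S : ℝ) (j : Fin (B+1)) (J : Fin (A+1))
    (heq : (∑ p, C J p * g p) + S = 0) (hS : S = 0)
    (hoff : ∀ p : Fin (B+1), p ≠ j → C J p = 0)
    (hne : C J j ≠ 0) : g j = 0 := by
  rw [hS, add_zero, Finset.sum_eq_single j (fun p _ hp => by rw [hoff p hp, zero_mul])
    (fun hc => absurd (Finset.mem_univ j) hc)] at heq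
  exact (mul_eq_zero.mp heq).resolve_left hne
lemma key_step' {A B : ℕ} (C : Matrix (Fin (A+1)) (Fin (B+1)) ℝ)
    (g : Fin (B+1) → ℝ) (S : ℝ) (j : Fin (B+1)) (J : Fin (A+1))
    (heq : S + (∑ q, C J q * g q) = 0) (hS : S = 0)
    (hoff : ∀ q : Fin (B+1), q ≠ j → C J q = 0)
    (hne : C J j ≠ 0) : g j = 0 := by
  rw [hS, zero_add, Finset.sum_eq_single j (fun q _ hq => by rw [hoff q hq, zero_mul])
    (fun hc => absurd (Finset.mem_univ j) hc)] at heq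
  exact (mul_eq_zero.mp heq).resolve_left hne

/-- Theorem 4.2(iii): for two decreasing chains `V₁ = C(a₀, a₀-m, …, a₀-lm)` and
`V₂ = C(b₀, b₀-m, …, b₀-l'm)` (realizing duals of type-Z modules): `S_t = 0` for all `t ≥ 1`. -/
theorem St_Z_decr_decr (m a₀ b₀ l l' : ℕ) (hm : 1 ≤ m)
    (hal : l * m ≤ a₀) (hbl : l' * m ≤ b₀) :
    ∀ t : ℕ, 1 ≤ t →
      chainSt m (fun i => a₀ - i * m) (fun j => b₀ - j * m) l l' t = ⊥ := by
  intro t ht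
  rw [eq_bot_iff]
  intro x hx
  rw [Submodule.mem_bot]
  rw [chainSt, Submodule.mem_inf] at hx
  obtain ⟨hx1, hx2⟩ := hx
  simp only [Submodule.mem_iInf, LinearMap.mem_ker, LinearMap.add_apply, LinearMap.coe_comp,
    Function.comp_apply, LinearMap.proj_apply] at hx1 hx2
  have hstepA : ∀ u : ℕ, u + 1 ≤ l → a₀ - u * m = (a₀ - (u + 1) * m) + m := by
    intro u hu
    have h1 : (u + 1) * m ≤ a₀ := le_trans (Nat.mul_le_mul_right m hu) hal
    have h2 : (u + 1) * m = u * m + m := by ring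
    omega
  have hstepB : ∀ u : ℕ, u + 1 ≤ l' → b₀ - u * m = (b₀ - (u + 1) * m) + m := by
    intro u hu
    have h1 : (u + 1) * m ≤ b₀ := le_trans (Nat.mul_le_mul_right m hu) hbl
    have h2 : (u + 1) * m = u * m + m := by ring
    omega
  have eqn : ∀ s, s ≤ m → ∀ i, i < t → ∀ (h1 : i + 1 < t + 1) (h0 : i < t + 1),
      ∀ (J : Fin (a₀ - i * m + 1)) (K : Fin (b₀ - (t - i - 1) * m + 1)),
        (∑ p : Fin (a₀ - (i + 1) * m + 1),
            rhoMat m (a₀ - i * m) (a₀ - (i + 1) * m) s J p * coordT p K (x ⟨i + 1, h1⟩))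
        + ∑ q : Fin (b₀ - (t - i) * m + 1),
            rhoMat m (b₀ - (t - i - 1) * m) (b₀ - (t - i) * m) s K q * coordT J q (x ⟨i, h0⟩)
          = 0 := by
    intro s hs i hi h1 h0 J K
    have h := congrArg (coordT J K) (hx2 s hs i hi)
    rw [(coordT J K).map_add, (coordT J K).map_zero] at h
    rw [coordT_rho_left, coordT_rho_right] at h
    exact h
  have key : ∀ n : ℕ, ∀ hn : n < t + 1, x ⟨n, hn⟩ = 0 := by
    intro n
    induction n using Nat.strong_induction_on with
    | _ n IHn =>
      intro hn
      by_cases hbound : l < n ∨ l' < t - n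
      · exact hx1 ⟨n, hn⟩ hbound
      push_neg at hbound
      obtain ⟨hnl, hnl'⟩ := hbound
      by_cases hnt : n < t
      case neg =>
        -- n = t, t ≤ l : use relation at t-1 and x_{t-1} = 0
        have pf1 : (t - 1) + 1 < t + 1 := by omega
        have pf0 : t - 1 < t + 1 := by omega
        rw [show (⟨n, hn⟩ : Fin (t + 1)) = ⟨(t - 1) + 1, pf1⟩ by
          simp only [Fin.mk.injEq]; omega]
        have hprev : x ⟨t - 1, pf0⟩ = 0 := IHn (t - 1) (by omega) pf0
        have ha : a₀ - (t - 1) * m = (a₀ - ((t - 1) + 1) * m) + m := hstepA (t - 1) (by omega)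
        apply eq_zero_of_coordT
        intro j k
        have hjlt : (j : ℕ) < a₀ - ((t - 1) + 1) * m + 1 := j.isLt
        refine key_step (rhoMat m (a₀ - (t - 1) * m) (a₀ - ((t - 1) + 1) * m) 0)
          (fun p => coordT p k (x ⟨(t - 1) + 1, pf1⟩)) _ j ⟨(j : ℕ), by omega⟩
          (eqn 0 (Nat.zero_le m) (t - 1) (by omega) pf1 pf0 ⟨(j : ℕ), by omega⟩ k) ?_ ?_ ?_
        · exact Finset.sum_eq_zero fun q _ => by
            rw [hprev, (coordT _ q).map_zero, mul_zero]
        · exact fun p hp => rhoMat_s0_eq_zero ha (fun hc => hp (Fin.ext hc.symm))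
        · exact rhoMat_s0_ne_zero hm ha rfl
      case pos =>
      have pf1 : n + 1 < t + 1 := by omega
      by_cases hnl2 : n < l
      case neg =>
        -- n = l < t : x_{n+1} = 0 by boundary, b-side s=0 diagonal
        have hb' : b₀ - (t - n - 1) * m = (b₀ - (t - n - 1 + 1) * m) + m :=
          hstepB (t - n - 1) (by omega)
        rw [show t - n - 1 + 1 = t - n by omega] at hb'
        have hnext : x ⟨n + 1, pf1⟩ = 0 := hx1 ⟨n + 1, pf1⟩ (Or.inl (show l < n + 1 by omega))
        apply eq_zero_of_coordT
        intro j k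
        have hklt : (k : ℕ) < b₀ - (t - n) * m + 1 := k.isLt
        refine key_step' (rhoMat m (b₀ - (t - n - 1) * m) (b₀ - (t - n) * m) 0)
          (fun q => coordT j q (x ⟨n, hn⟩)) _ k ⟨(k : ℕ), by omega⟩
          (eqn 0 (Nat.zero_le m) n hnt pf1 hn j ⟨(k : ℕ), by omega⟩) ?_ ?_ ?_
        · exact Finset.sum_eq_zero fun p _ => by
            rw [hnext, (coordT p _).map_zero, mul_zero]
        · exact fun q hq => rhoMat_s0_eq_zero hb' (fun hc => hq (Fin.ext hc.symm))
        · exact rhoMat_s0_ne_zero hm hb' rfl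
      case pos =>
        -- main case : n < l, n < t, t - n ≤ l'
        have ha : a₀ - n * m = (a₀ - (n + 1) * m) + m := hstepA n (by omega)
        have hb' : b₀ - (t - n - 1) * m = (b₀ - (t - n - 1 + 1) * m) + m :=
          hstepB (t - n - 1) (by omega)
        rw [show t - n - 1 + 1 = t - n by omega] at hb'
        apply eq_zero_of_coordT
        suffices inner : ∀ J : ℕ, ∀ (j : Fin (a₀ - n * m + 1)) (k : Fin (b₀ - (t - n) * m + 1)),
            (j : ℕ) = J → coordT j k (x ⟨n, hn⟩) = 0 by
          exact fun j k => inner (j : ℕ) j k rfl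
        intro J
        induction J using Nat.strong_induction_on with
        | _ J IH =>
          intro j k hjJ
          have hklt : (k : ℕ) < b₀ - (t - n) * m + 1 := k.isLt
          have hkK : (k : ℕ) + m < b₀ - (t - n - 1) * m + 1 := by omega
          set K' : Fin (b₀ - (t - n - 1) * m + 1) := ⟨(k : ℕ) + m, hkK⟩ with hK'
          have hK'val : (K' : ℕ) = (k : ℕ) + m := rfl
          have stepA : ∀ p : Fin (a₀ - (n + 1) * m + 1), (p : ℕ) + m = (j : ℕ) →
              coordT p K' (x ⟨n + 1, pf1⟩) = 0 := by
            intro p hp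
            have hplt : (p : ℕ) < a₀ - (n + 1) * m + 1 := p.isLt
            refine key_step (rhoMat m (a₀ - n * m) (a₀ - (n + 1) * m) 0)
              (fun p' => coordT p' K' (x ⟨n + 1, pf1⟩)) _ p ⟨(p : ℕ), by omega⟩
              (eqn 0 (Nat.zero_le m) n hnt pf1 hn ⟨(p : ℕ), by omega⟩ K') ?_ ?_ ?_
            · exact Finset.sum_eq_zero fun q _ => by
                rw [IH (p : ℕ) (by omega) ⟨(p : ℕ), by omega⟩ q rfl, mul_zero]
            · exact fun p' hp' => rhoMat_s0_eq_zero ha (fun hc => hp' (Fin.ext hc.symm))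
            · exact rhoMat_s0_ne_zero hm ha rfl
          refine key_step' (rhoMat m (b₀ - (t - n - 1) * m) (b₀ - (t - n) * m) m)
            (fun q => coordT j q (x ⟨n, hn⟩)) _ k K'
            (eqn m le_rfl n hnt pf1 hn j K') ?_ ?_ ?_
          · refine Finset.sum_eq_zero fun p _ => ?_
            by_cases hp : (j : ℕ) = (p : ℕ) + m
            · rw [stepA p hp.symm, mul_zero]
            · rw [rhoMat_sm_eq_zero ha hp, zero_mul]
          · exact fun q hq => rhoMat_sm_eq_zero hb'
              (fun hc => hq (Fin.ext (by omega : (q : ℕ) = (k : ℕ))))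
          · exact rhoMat_sm_ne_zero hm hb' rfl
  funext i
  have h := key (i : ℕ) i.isLt
  rw [Fin.eta] at h
  exact h
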